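/- Let x and y be clusters appearing in (possibly different) cluster decompositions of the same multiset z of points in a metric space. Then either x and y are disjoint (as sub-multisets of z), or one contains the other. -/

import Mathlib

/-- A clustering rule: sequences of positive reals `0 < r 1 < r 2 < ...` and
`0 = d 1 < d 2 < ...` with `r k > d k + r (k-1)` and `d k > 6 * r (k-1)` for `k ≥ 2`. -/
def ClusteringRule (r d : ℕ → ℝ) : Prop :=
  0 < r 1 ∧ d 1 = 0 ∧
  (∀ k, 1 ≤ k → r k < r (k + 1)) ∧
  (∀ k, 1 ≤ k → d k < d (k + 1)) ∧
  (∀ k, 2 ≤ k → d k + r (k - 1) < r k) ∧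
  (∀ k, 2 ≤ k → 6 * r (k - 1) < d k)

private lemma rule_r_mono {r d : ℕ → ℝ} (h : ClusteringRule r d) :
    ∀ a b, 1 ≤ a → a ≤ b → r a ≤ r b := by
  intro a b ha hab
  induction b with
  | zero => omega
  | succ n ih =>
    rcases Nat.lt_or_ge a (n + 1) with h1 | h1
    · have h2 : a ≤ n := by omega
      have hn : 1 ≤ n := by omega
      exact (ih h2).trans (h.2.2.1 n hn).le
    · have h2 : a = n + 1 := by omega
      simp [h2]

private lemma rule_r_pos {r d : ℕ → ℝ} (h : ClusteringRule r d) {a : ℕ} (ha : 1 ≤ a) :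
    0 < r a :=
  lt_of_lt_of_le h.1 (rule_r_mono h 1 a le_rfl ha)

private lemma nested_aux {M : Type*} [MetricSpace M] [DecidableEq M]
    (r d : ℕ → ℝ) (hrule : ClusteringRule r d) (z : Multiset M)
    (m : ℕ) (X : Fin m → Multiset M) (cX : Fin m → M)
    (hXsum : (∑ i, X i) = z)
    (hXconf : ∀ i, ∀ p ∈ X i, dist p (cX i) < r (X i).card)
    (l : ℕ) (Y : Fin l → Multiset M) (cY : Fin l → M)
    (hYsum : (∑ j, Y j) = z) (hYne : ∀ j, Y j ≠ 0)
    (hYconf : ∀ j, ∀ p ∈ Y j, dist p (cY j) < r (Y j).card)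
    (hYsep : ∀ i j, i ≠ j → d ((Y i).card + (Y j).card) < dist (cY i) (cY j))
    (i₀ : Fin m) (j₀ : Fin l)
    (hcard : (X i₀).card ≤ (Y j₀).card)
    (p : M) (hpX : p ∈ X i₀) (hpY : p ∈ Y j₀) :
    X i₀ ≤ Y j₀ := by
  have hXle : X i₀ ≤ z := by
    rw [← hXsum]
    exact Finset.single_le_sum (f := X) (fun i _ => zero_le) (Finset.mem_univ i₀)
  rw [Multiset.le_iff_count]
  intro q
  by_cases hq : q ∈ X i₀
  · -- q cannot be in any Y j with j ≠ j₀
    have hclaim : ∀ j, j ≠ j₀ → q ∉ Y j := by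
      intro j hj hqY
      set a := (Y j₀).card with ha
      set b := (Y j).card with hb
      set c := (X i₀).card with hc
      have ha1 : 1 ≤ a := Multiset.card_pos.mpr (hYne j₀)
      have hb1 : 1 ≤ b := Multiset.card_pos.mpr (hYne j)
      have hc1 : 1 ≤ c := Multiset.card_pos.mpr (fun h0 => by simp [h0] at hpX)
      have hk2 : 2 ≤ a + b := by omega
      have hra : r a ≤ r (a + b - 1) := rule_r_mono hrule a (a + b - 1) ha1 (by omega)
      have hrb : r b ≤ r (a + b - 1) := rule_r_mono hrule b (a + b - 1) hb1 (by omega)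
      have hrc : r c ≤ r (a + b - 1) :=
        rule_r_mono hrule c (a + b - 1) hc1 (by omega)
      have hrpos : 0 < r (a + b - 1) := rule_r_pos hrule (by omega)
      have h1 : dist (cY j₀) (cY j) ≤ dist (cY j₀) p + dist p q + dist q (cY j) :=
        dist_triangle4 _ _ _ _
      have h2 : dist p q ≤ dist p (cX i₀) + dist (cX i₀) q := dist_triangle _ _ _
      have e1 : dist (cY j₀) p < r a := by
        rw [dist_comm]; exact hYconf j₀ p hpY
      have e2 : dist p (cX i₀) < r c := hXconf i₀ p hpX
      have e3 : dist (cX i₀) q < r c := by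
        rw [dist_comm]; exact hXconf i₀ q hq
      have e4 : dist q (cY j) < r b := hYconf j q hqY
      have hsep : d (a + b) < dist (cY j₀) (cY j) := hYsep j₀ j (Ne.symm hj)
      have hd6 : 6 * r (a + b - 1) < d (a + b) := hrule.2.2.2.2.2 (a + b) hk2
      linarith
    have hcz : (X i₀).count q ≤ z.count q := Multiset.le_iff_count.mp hXle q
    have hzY : z.count q = (Y j₀).count q := by
      rw [← hYsum, Multiset.count_sum']
      rw [Finset.sum_eq_single j₀]
      · intro j _ hj
        exact Multiset.count_eq_zero_of_notMem (hclaim j hj)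
      · intro h; exact absurd (Finset.mem_univ j₀) h
    omega
  · simp [Multiset.count_eq_zero_of_notMem hq]

/-- Two clusters appearing in (possibly different) cluster decompositions of the same
multiset `z` are either disjoint or nested. -/
theorem clusters_nested_or_disjoint {M : Type*} [MetricSpace M] [DecidableEq M]
    (r d : ℕ → ℝ) (hrule : ClusteringRule r d) (z : Multiset M)
    (m : ℕ) (X : Fin m → Multiset M) (cX : Fin m → M)
    (hXsum : (∑ i, X i) = z) (hXne : ∀ i, X i ≠ 0)
    (hXconf : ∀ i, ∀ p ∈ X i, dist p (cX i) < r (X i).card)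
    (hXsep : ∀ i j, i ≠ j → d ((X i).card + (X j).card) < dist (cX i) (cX j))
    (l : ℕ) (Y : Fin l → Multiset M) (cY : Fin l → M)
    (hYsum : (∑ j, Y j) = z) (hYne : ∀ j, Y j ≠ 0)
    (hYconf : ∀ j, ∀ p ∈ Y j, dist p (cY j) < r (Y j).card)
    (hYsep : ∀ i j, i ≠ j → d ((Y i).card + (Y j).card) < dist (cY i) (cY j))
    (i₀ : Fin m) (j₀ : Fin l) :
    X i₀ ∩ Y j₀ = 0 ∨ X i₀ ≤ Y j₀ ∨ Y j₀ ≤ X i₀ := by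
  by_cases hd : X i₀ ∩ Y j₀ = 0
  · exact Or.inl hd
  · obtain ⟨p, hp⟩ := Multiset.exists_mem_of_ne_zero hd
    rw [Multiset.mem_inter] at hp
    rcases le_total (X i₀).card (Y j₀).card with hc | hc
    · exact Or.inr (Or.inl (nested_aux r d hrule z m X cX hXsum hXconf l Y cY hYsum
        hYne hYconf hYsep i₀ j₀ hc p hp.1 hp.2))
    · exact Or.inr (Or.inr (nested_aux r d hrule z l Y cY hYsum hYconf m X cX hXsum
        hXne hXconf hXsep j₀ i₀ hc p hp.2 hp.1))
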